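/- Let f : {(x,y) ∈ ℤ² : x < y} → ℝ be finitely supported, and define (Ŝf)(x,y) = ½ [f(x,y+1) + f(x−1,y) − 2 f(x,y)] + ½·1_{y−x>1} [f(x,y−1) + f(x+1,y) − 2 f(x,y)]. Then for every x ∈ ℕ, the reduced function satisfies (Ŝf)‾(x) = f̄(x+1) − f̄(x) + 1_{x>0} (f̄(x−1) − f̄(x)); that is, (Ŝf)‾ = 𝒮 f̄. -/

import Mathlib

/-- The generator of the symmetric nearest-neighbor random walk on `ℕ` reflected at `0`. -/
noncomputable def walkGen (g : ℕ → ℝ) : ℕ → ℝ :=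
  fun x => if x = 0 then g 1 - g 0 else g (x + 1) + g (x - 1) - 2 * g x

/-- The action `Ŝ` of the symmetric simple exclusion generator on degree-two
coefficient functions `f(x,y)`, `x < y`:
`(Ŝf)(x,y) = ½[f(x,y+1) + f(x-1,y) - 2f(x,y)] + ½·1_{y-x>1}[f(x,y-1) + f(x+1,y) - 2f(x,y)]`. -/
noncomputable def Shat (f : ℤ → ℤ → ℝ) : ℤ → ℤ → ℝ :=
  fun x y =>
    (f x (y + 1) + f (x - 1) y - 2 * f x y) / 2 +
      if 1 < y - x then (f x (y - 1) + f (x + 1) y - 2 * f x y) / 2 else 0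

/-- The reduced function `f̄(x) = ∑_y f(y, y + x + 1)`. -/
noncomputable def reduced (f : ℤ → ℤ → ℝ) : ℕ → ℝ :=
  fun x => ∑ᶠ y : ℤ, f y (y + (x : ℤ) + 1)

/-- For a finitely supported `f` on `{(x,y) : x < y}`, the reduction of `Ŝf` equals
`𝒮` applied to the reduction of `f`: `(Ŝf)‾ = 𝒮 f̄`. -/
theorem reduced_Shat (f : ℤ → ℤ → ℝ)
    (hfin : (Function.support fun p : ℤ × ℤ => f p.1 p.2).Finite)
    (hdom : ∀ x y : ℤ, y ≤ x → f x y = 0) :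
    ∀ x : ℕ, reduced (Shat f) x = walkGen (reduced f) x := by
  -- finiteness of support of any slice
  have hfs : ∀ g : ℤ → ℤ, (Function.support fun y : ℤ => f y (g y)).Finite := by
    intro g
    apply (hfin.image Prod.fst).subset
    intro y hy
    exact ⟨(y, g y), hy, rfl⟩
  have hfs' : ∀ (a : ℤ) (g : ℤ → ℤ),
      (Function.support fun y : ℤ => f (y + a) (g y)).Finite := by
    intro a g
    apply ((hfin.image Prod.fst).image (fun z => z - a)).subset
    intro y hy
    exact ⟨y + a, ⟨(y + a, g y), hy, rfl⟩, by ring⟩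
  -- distribute finsum over the standard combination
  have hdist : ∀ g1 g2 g3 : ℤ → ℝ, (Function.support g1).Finite →
      (Function.support g2).Finite → (Function.support g3).Finite →
      (∑ᶠ y : ℤ, (g1 y + g2 y - 2 * g3 y) / 2) =
        ((∑ᶠ y, g1 y) + (∑ᶠ y, g2 y) - 2 * ∑ᶠ y, g3 y) / 2 := by
    intro g1 g2 g3 h1 h2 h3
    have h3' : (Function.support fun y => 2 * g3 y).Finite :=
      h3.subset fun y hy => by
        simp only [Function.mem_support] at *
        intro h; exact hy (by rw [h, mul_zero])
    have h12 : (Function.support fun y => g1 y + g2 y).Finite :=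
      (h1.union h2).subset (Function.support_add _ _)
    have h123 : (Function.support fun y => g1 y + g2 y - 2 * g3 y).Finite :=
      (h12.union h3').subset (Function.support_sub _ _)
    have hdiv : (Function.support fun y => (g1 y + g2 y - 2 * g3 y) / 2).Finite :=
      h123.subset fun y hy => by
        simp only [Function.mem_support] at *
        intro h; exact hy (by rw [h, zero_div])
    rw [eq_div_iff (two_ne_zero (α := ℝ)), finsum_mul' _ _ hdiv,
      ← finsum_add_distrib h1 h2, mul_finsum' _ _ h3, ← finsum_sub_distrib h12 h3']
    exact finsum_congr fun y => by ring
  -- shift lemma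
  have hshift : ∀ a b : ℤ, (∑ᶠ y : ℤ, f (y + a) (y + b)) = ∑ᶠ y : ℤ, f y (y + (b - a)) := by
    intro a b
    have := finsum_comp (g := fun y : ℤ => f y (y + (b - a))) (fun y : ℤ => y + a)
      (Equiv.addRight a).bijective
    rw [← this]
    exact finsum_congr fun y => by ring_nf
  intro x
  rcases Nat.eq_zero_or_pos x with hx | hx
  · subst hx
    have h1 : reduced (Shat f) 0 =
        ∑ᶠ y : ℤ, (f y (y + 2) + f (y + (-1)) (y + 1) - 2 * f y (y + 1)) / 2 := by
      unfold reduced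
      apply finsum_congr
      intro y
      simp only [Shat, Nat.cast_zero]
      rw [if_neg (show ¬ (1 : ℤ) < y + 0 + 1 - y by omega), add_zero,
        show y + 0 + 1 + 1 = y + 2 from by ring, show y + 0 + 1 = y + 1 from by ring,
        show y - 1 = y + -1 from by ring]
    have a1 : (∑ᶠ y : ℤ, f y (y + ((1 : ℤ) - -1))) = ∑ᶠ y : ℤ, f y (y + 2) := by norm_num
    have a2 : reduced f 1 = ∑ᶠ y : ℤ, f y (y + 2) := by
      unfold reduced
      apply finsum_congr
      intro y
      rw [show y + ((1:ℕ):ℤ) + 1 = y + 2 from by push_cast; ring]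
    have a3 : reduced f 0 = ∑ᶠ y : ℤ, f y (y + 1) := by
      unfold reduced
      apply finsum_congr
      intro y
      rw [show y + ((0:ℕ):ℤ) + 1 = y + 1 from by push_cast; ring]
    rw [h1, hdist _ _ _ (hfs _) (hfs' _ _) (hfs _), hshift (-1) 1, a1,
      walkGen, if_pos rfl, a2, a3]
    ring
  · have hx0 : x ≠ 0 := by omega
    simp only [reduced, walkGen, if_neg hx0]
    have h1 : (∑ᶠ y : ℤ, Shat f y (y + (x : ℤ) + 1)) =
        (∑ᶠ y : ℤ, (f y (y + ((x : ℤ) + 2)) + f (y + (-1)) (y + ((x : ℤ) + 1)) - 2 * f y (y + ((x : ℤ) + 1))) / 2)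
        + (∑ᶠ y : ℤ, (f y (y + (x : ℤ)) + f (y + 1) (y + ((x : ℤ) + 1)) - 2 * f y (y + ((x : ℤ) + 1))) / 2) := by
      rw [← finsum_add_distrib]
      · apply finsum_congr
        intro y
        have hcond : (1 : ℤ) < y + (x : ℤ) + 1 - y := by omega
        simp only [Shat, if_pos hcond]
        ring_nf
      · apply ((hfs _).union ((hfs' _ _).union (hfs _))).subset
        intro y hy
        simp only [Function.mem_support, Set.mem_union] at *
        by_contra h
        push_neg at h
        apply hy
        rw [h.1, h.2.1, h.2.2]
        ring
      · apply ((hfs _).union ((hfs' _ _).union (hfs _))).subset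
        intro y hy
        simp only [Function.mem_support, Set.mem_union] at *
        by_contra h
        push_neg at h
        apply hy
        rw [h.1, h.2.1, h.2.2]
        ring
    rw [h1, hdist _ _ _ (hfs _) (hfs' _ _) (hfs _), hdist _ _ _ (hfs _) (hfs' _ _) (hfs _),
      hshift (-1) ((x : ℤ) + 1), hshift 1 ((x : ℤ) + 1)]
    have e1 : ((x : ℤ) + 2) = (((x + 1 : ℕ) : ℤ)) + 1 := by push_cast; ring
    have e2 : ((x : ℤ) + 1 - (-1)) = (((x + 1 : ℕ) : ℤ)) + 1 := by push_cast; ring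
    have e3 : ((x : ℤ)) = (((x - 1 : ℕ) : ℤ)) + 1 := by
      have : (((x - 1 : ℕ)) : ℤ) = (x : ℤ) - 1 := by omega
      rw [this]; ring
    have e4 : ((x : ℤ) + 1 - 1) = (((x - 1 : ℕ) : ℤ)) + 1 := by
      rw [e3]; ring
    have r1 : (∑ᶠ y : ℤ, f y (y + ((x : ℤ) + 2))) = ∑ᶠ y : ℤ, f y (y + ((x + 1 : ℕ) : ℤ) + 1) := by
      apply finsum_congr; intro y; rw [e1]; ring_nf
    have r2 : (∑ᶠ y : ℤ, f y (y + ((x : ℤ) + 1 - -1))) = ∑ᶠ y : ℤ, f y (y + ((x + 1 : ℕ) : ℤ) + 1) := by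
      apply finsum_congr; intro y; rw [e2]; ring_nf
    have r3 : (∑ᶠ y : ℤ, f y (y + (x : ℤ))) = ∑ᶠ y : ℤ, f y (y + ((x - 1 : ℕ) : ℤ) + 1) := by
      apply finsum_congr; intro y; rw [e3]; ring_nf
    have r4 : (∑ᶠ y : ℤ, f y (y + ((x : ℤ) + 1 - 1))) = ∑ᶠ y : ℤ, f y (y + ((x - 1 : ℕ) : ℤ) + 1) := by
      apply finsum_congr; intro y; rw [e4]; ring_nf
    have r5 : (∑ᶠ y : ℤ, f y (y + ((x : ℤ) + 1))) = ∑ᶠ y : ℤ, f y (y + (x : ℤ) + 1) := by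
      apply finsum_congr; intro y; ring_nf
    rw [r1, r2, r3, r4, r5]
    ring
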